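/- Let σ > 0, c₀ > 0 and w* ∈ ℝ. Define the time-varying soft-thresholding operator S(t, x) := sgn(x)·max(|x| − c₀·t, 0) for t ≥ 0, x ∈ ℝ. Suppose v : [0,∞) → ℝ is differentiable with v′(t) = −σ²·( S(t, v(t)) − w* ) for all t > 0, let w(t) := S(t, v(t)), and suppose w(t) converges to a limit w^∞ ≠ 0 as t → ∞. Then |w^∞ − w*| = c₀/σ². -/
import Mathlib

open Filter

/-- If `g` is differentiable past `T` with derivative `φ`, `g` converges at infinity
and `φ` converges at infinity, then the limit of `φ` is `0`. -/
lemma aux_deriv_zero {g φ : ℝ → ℝ} {L M T : ℝ} (hT : 0 ≤ T)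
    (hg : ∀ t, T < t → HasDerivAt g (φ t) t)
    (hgl : Filter.Tendsto g Filter.atTop (nhds L))
    (hφl : Filter.Tendsto φ Filter.atTop (nhds M)) : M = 0 := by
  have key : ∀ n : ℕ, ∃ c ∈ Set.Ioo (T + 1 + (n : ℝ)) (T + 2 + n),
      φ c = g (T + 2 + n) - g (T + 1 + n) := by
    intro n
    have hn : (0:ℝ) ≤ (n:ℝ) := Nat.cast_nonneg n
    have hab : T + 1 + (n:ℝ) < T + 2 + n := by linarith
    have hcont : ContinuousOn g (Set.Icc (T + 1 + (n:ℝ)) (T + 2 + n)) := by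
      intro x hx
      exact (hg x (by have := hx.1; linarith)).continuousAt.continuousWithinAt
    have hderiv : ∀ x ∈ Set.Ioo (T + 1 + (n:ℝ)) (T + 2 + n), HasDerivAt g (φ x) x :=
      fun x hx => hg x (by have := hx.1; linarith)
    obtain ⟨c, hc, hc'⟩ := exists_hasDerivAt_eq_slope g φ hab hcont hderiv
    refine ⟨c, hc, ?_⟩
    rw [hc']
    have h1 : T + 2 + (n:ℝ) - (T + 1 + n) = 1 := by ring
    rw [h1, div_one]
  choose ξ hξ hφξ using key
  have hξ_top : Filter.Tendsto ξ Filter.atTop Filter.atTop := by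
    apply Filter.tendsto_atTop_mono (fun n => ?_) tendsto_natCast_atTop_atTop
    have h := (hξ n).1
    linarith
  have h1 : Filter.Tendsto (fun n => φ (ξ n)) Filter.atTop (nhds M) := hφl.comp hξ_top
  have h2 : Filter.Tendsto (fun n => φ (ξ n)) Filter.atTop (nhds 0) := by
    have ha : Filter.Tendsto (fun n : ℕ => g (T + 2 + n)) Filter.atTop (nhds L) :=
      hgl.comp (Filter.tendsto_atTop_add_const_left _ _ tendsto_natCast_atTop_atTop)
    have hb : Filter.Tendsto (fun n : ℕ => g (T + 1 + n)) Filter.atTop (nhds L) :=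
      hgl.comp (Filter.tendsto_atTop_add_const_left _ _ tendsto_natCast_atTop_atTop)
    have hc := ha.sub hb
    rw [sub_self] at hc
    exact hc.congr (fun n => (hφξ n).symm)
  exact tendsto_nhds_unique h1 h2

/-- the mean-dynamics of RDA with ℓ₁ penalty strength `c₀` on a
single coordinate of a least-squares regression is asymptotically biased:
if `w(t) = S(t, v(t))` converges to `w^∞ ≠ 0`, then `|w^∞ − w*| = c₀/σ²`,
where `S(t,x) = sgn(x)·(|x| − c₀t)₊` is the time-varying soft-thresholding operator. -/
theorem stmt10 {σ c₀ : ℝ} (hσ : 0 < σ) (hc₀ : 0 < c₀) (wstar : ℝ)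
    (v : ℝ → ℝ) (hv : ContinuousOn v (Set.Ici 0))
    (hode : ∀ t : ℝ, 0 < t →
      HasDerivAt v (-(σ ^ 2) * (Real.sign (v t) * max (|v t| - c₀ * t) 0 - wstar)) t)
    (winf : ℝ) (hwinf : winf ≠ 0)
    (hlim : Filter.Tendsto (fun t => Real.sign (v t) * max (|v t| - c₀ * t) 0)
      Filter.atTop (nhds winf)) :
    |winf - wstar| = c₀ / σ ^ 2 := by
  set W : ℝ → ℝ := fun t => Real.sign (v t) * max (|v t| - c₀ * t) 0 with hW
  have hσ2 : (0:ℝ) < σ ^ 2 := by positivity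
  have hmulC : ∀ t : ℝ, HasDerivAt (fun u : ℝ => c₀ * u) c₀ t := by
    intro t
    simpa using (hasDerivAt_id t).const_mul c₀
  rcases hwinf.lt_or_gt with hneg | hpos
  · -- winf < 0 : eventually W t = v t + c₀ * t
    have hev : ∀ᶠ t in Filter.atTop, W t = v t + c₀ * t := by
      filter_upwards [hlim.eventually (eventually_lt_nhds (show winf < winf / 2 by linarith))]
        with t ht
      have hWneg : W t < 0 := by linarith
      rcases lt_trichotomy (v t) 0 with h | h | h
      · have hs : Real.sign (v t) = -1 := Real.sign_of_neg h
        have habs : |v t| = -v t := abs_of_neg h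
        rw [hW] at hWneg ⊢
        simp only [hs, habs] at hWneg ⊢
        have hmax : 0 < max (-v t - c₀ * t) 0 := by nlinarith [le_max_right (-v t - c₀ * t) (0:ℝ)]
        have : max (-v t - c₀ * t) 0 = -v t - c₀ * t := by
          rcases max_cases (-v t - c₀ * t) (0:ℝ) with ⟨h1, _⟩ | ⟨h1, _⟩
          · exact h1
          · linarith [h1 ▸ hmax]
        rw [this]; ring
      · exfalso; rw [hW] at hWneg; simp [h] at hWneg
      · exfalso
        have hs : Real.sign (v t) = 1 := Real.sign_of_pos h
        rw [hW] at hWneg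
        simp only [hs, one_mul] at hWneg
        linarith [le_max_right (|v t| - c₀ * t) (0:ℝ)]
    have hg : ∀ t : ℝ, 0 < t →
        HasDerivAt (fun u => v u + c₀ * u) (-(σ ^ 2) * (W t - wstar) + c₀) t :=
      fun t ht => (hode t ht).add (hmulC t)
    have hgl : Filter.Tendsto (fun t => v t + c₀ * t) Filter.atTop (nhds winf) :=
      hlim.congr' hev
    have hφl : Filter.Tendsto (fun t => -(σ ^ 2) * (W t - wstar) + c₀) Filter.atTop
        (nhds (-(σ ^ 2) * (winf - wstar) + c₀)) :=
      ((hlim.sub_const wstar).const_mul _).add_const c₀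
    have hM : -(σ ^ 2) * (winf - wstar) + c₀ = 0 := aux_deriv_zero le_rfl hg hgl hφl
    have hval : winf - wstar = c₀ / σ ^ 2 := by field_simp; linarith
    rw [hval, abs_of_pos (by positivity)]
  · -- winf > 0 : eventually W t = v t - c₀ * t
    have hev : ∀ᶠ t in Filter.atTop, W t = v t - c₀ * t := by
      filter_upwards [hlim.eventually (eventually_gt_nhds (show winf / 2 < winf by linarith))]
        with t ht
      have hWpos : 0 < W t := by linarith
      rcases lt_trichotomy (v t) 0 with h | h | h
      · exfalso
        have hs : Real.sign (v t) = -1 := Real.sign_of_neg h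
        rw [hW] at hWpos
        simp only [hs, neg_one_mul] at hWpos
        linarith [le_max_right (|v t| - c₀ * t) (0:ℝ)]
      · exfalso; rw [hW] at hWpos; simp [h] at hWpos
      · have hs : Real.sign (v t) = 1 := Real.sign_of_pos h
        have habs : |v t| = v t := abs_of_pos h
        rw [hW] at hWpos ⊢
        simp only [hs, habs, one_mul] at hWpos ⊢
        rcases max_cases (v t - c₀ * t) (0:ℝ) with ⟨h1, _⟩ | ⟨h1, _⟩
        · exact h1
        · linarith [h1 ▸ hWpos]
    have hg : ∀ t : ℝ, 0 < t →
        HasDerivAt (fun u => v u - c₀ * u) (-(σ ^ 2) * (W t - wstar) - c₀) t :=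
      fun t ht => (hode t ht).sub (hmulC t)
    have hgl : Filter.Tendsto (fun t => v t - c₀ * t) Filter.atTop (nhds winf) :=
      hlim.congr' hev
    have hφl : Filter.Tendsto (fun t => -(σ ^ 2) * (W t - wstar) - c₀) Filter.atTop
        (nhds (-(σ ^ 2) * (winf - wstar) - c₀)) :=
      ((hlim.sub_const wstar).const_mul _).sub_const c₀
    have hM : -(σ ^ 2) * (winf - wstar) - c₀ = 0 := aux_deriv_zero le_rfl hg hgl hφl
    have hval : winf - wstar = -(c₀ / σ ^ 2) := by field_simp; linarith
    rw [hval, abs_neg, abs_of_pos (by positivity)]
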